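/- Let k ≥ 2 and let G be a finite Eulerian (s,k)-edge-connected graph with deg(s) ≥ 2. Then the complement of the lifting graph L(G, s, k) is disconnected. -/

import Mathlib

universe u v

/-- A loopless multigraph on vertex type `V` with edge type `E`:
each edge `e` has two distinct endpoints `fst e` and `snd e`. -/
structure Multigraph (V : Type u) (E : Type v) where
  fst : E → V
  snd : E → V
  loopless : ∀ e, fst e ≠ snd e

namespace Multigraph

variable {V : Type u} {E : Type v}

/-- The edge `e` has endpoints `a` and `b`. -/
def Inc (G : Multigraph V E) (e : E) (a b : V) : Prop :=
  (G.fst e = a ∧ G.snd e = b) ∨ (G.fst e = b ∧ G.snd e = a)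

/-- The edge `e` is incident with the vertex `s`. -/
def IncVert (G : Multigraph V E) (s : V) (e : E) : Prop :=
  G.fst e = s ∨ G.snd e = s

/-- The degree of a vertex: the number of edges incident with it. -/
noncomputable def degree (G : Multigraph V E) (s : V) : ℕ :=
  {e : E | G.IncVert s e}.ncard

/-- A graph is locally finite if every vertex is incident with only finitely many edges. -/
def LocallyFinite (G : Multigraph V E) : Prop :=
  ∀ s : V, {e : E | G.IncVert s e}.Finite

/-- `δ(S)`: the set of edges with exactly one endpoint in `S`. -/
def edgeCut (G : Multigraph V E) (S : Set V) : Set E :=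
  {e : E | (G.fst e ∈ S ∧ G.snd e ∉ S) ∨ (G.fst e ∉ S ∧ G.snd e ∈ S)}

open Classical in
/-- The endpoint of `e` other than `s` (for `e` incident with `s`). -/
noncomputable def other (G : Multigraph V E) (s : V) (e : E) : V :=
  if G.fst e = s then G.snd e else G.fst e

open Classical in
/-- For an edge of `δ(S)`, its endpoint outside `S`. -/
noncomputable def outEnd (G : Multigraph V E) (S : Set V) (e : E) : V :=
  if G.fst e ∈ S then G.snd e else G.fst e

/-- Walks in a multigraph. -/
inductive Walk (G : Multigraph V E) : V → V → Type (max u v)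
  | nil (x : V) : Walk G x x
  | cons {x y z : V} (e : E) (h : G.Inc e x y) (p : Walk G y z) : Walk G x z

namespace Walk

variable {G : Multigraph V E}

/-- The list of edges used by a walk. -/
def edges : ∀ {x y : V}, G.Walk x y → List E
  | _, _, .nil _ => []
  | _, _, .cons e _ p => e :: edges p

/-- The list of vertices visited by a walk. -/
def support : ∀ {x y : V}, G.Walk x y → List V
  | _, y, .nil _ => [y]
  | x, _, .cons _ _ p => x :: support p

/-- A walk is a path if it has no repeated vertices. -/
def IsPath {x y : V} (p : G.Walk x y) : Prop := p.support.Nodup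

end Walk

/-- There are `k` pairwise edge-disjoint paths from `x` to `y`. -/
def EdgeDisjointPaths (G : Multigraph V E) (k : ℕ) (x y : V) : Prop :=
  ∃ P : Fin k → G.Walk x y,
    (∀ i, (P i).IsPath) ∧ ∀ i j, i ≠ j → List.Disjoint (P i).edges (P j).edges

/-- `G` is `k`-edge-connected: between any two distinct vertices there are `k`
pairwise edge-disjoint paths. -/
def EdgeConnected (G : Multigraph V E) (k : ℕ) : Prop :=
  ∀ x y : V, x ≠ y → G.EdgeDisjointPaths k x y

/-- `G` is `(s,k)`-edge-connected: between any two distinct vertices different from `s`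
there are `k` pairwise edge-disjoint paths (possibly through `s`). -/
def SEdgeConnected (G : Multigraph V E) (s : V) (k : ℕ) : Prop :=
  ∀ x y : V, x ≠ s → y ≠ s → x ≠ y → G.EdgeDisjointPaths k x y

/-- An orientation of `G` assigns to each edge a tail and a head (its two endpoints). -/
structure Orientation (G : Multigraph V E) where
  tail : E → V
  head : E → V
  inc : ∀ e, G.Inc e (tail e) (head e)

namespace Orientation

variable {G : Multigraph V E}

/-- Directed walks with respect to an orientation. -/
inductive DiWalk (o : G.Orientation) : V → V → Type (max u v)
  | nil (x : V) : DiWalk o x x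
  | cons {x y z : V} (e : E) (ht : o.tail e = x) (hh : o.head e = y) (p : DiWalk o y z) :
      DiWalk o x z

namespace DiWalk

variable {o : G.Orientation}

/-- The list of arcs used by a directed walk. -/
def edges : ∀ {x y : V}, o.DiWalk x y → List E
  | _, _, .nil _ => []
  | _, _, .cons e _ _ p => e :: edges p

/-- The list of vertices visited by a directed walk. -/
def support : ∀ {x y : V}, o.DiWalk x y → List V
  | _, y, .nil _ => [y]
  | x, _, .cons _ _ _ p => x :: support p

/-- A directed walk is a directed path if it has no repeated vertices. -/
def IsPath {x y : V} (p : o.DiWalk x y) : Prop := p.support.Nodup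

end DiWalk

/-- An orientation is `k`-arc-connected if from any vertex to any other there are `k`
pairwise arc-disjoint directed paths. -/
def ArcConnected (o : G.Orientation) (k : ℕ) : Prop :=
  ∀ x y : V, ∃ P : Fin k → o.DiWalk x y,
    (∀ i, (P i).IsPath) ∧ ∀ i j, i ≠ j → List.Disjoint (P i).edges (P j).edges

end Orientation

/-- A ray: a one-way infinite path. -/
structure Ray (G : Multigraph V E) where
  vert : ℕ → V
  edge : ℕ → E
  inc : ∀ n, G.Inc (edge n) (vert n) (vert (n + 1))
  inj : Function.Injective vert

/-- Two rays are edge-disjoint. -/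
def Ray.EdgeDisjoint {G : Multigraph V E} (R R' : G.Ray) : Prop :=
  ∀ m n, R.edge m ≠ R'.edge n

/-- A walk is edge-disjoint from a ray. -/
def Walk.EdgeDisjointRay {G : Multigraph V E} {x y : V} (p : G.Walk x y) (R : G.Ray) : Prop :=
  ∀ e ∈ p.edges, ∀ n, R.edge n ≠ e

/-- Two rays are equivalent (belong to the same end) if there are infinitely many
pairwise vertex-disjoint paths between them. -/
def RayEquiv (G : Multigraph V E) (R R' : G.Ray) : Prop :=
  ∃ P : ℕ → (Σ (m n : ℕ), G.Walk (R.vert m) (R'.vert n)),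
    (∀ i, (P i).2.2.IsPath) ∧
      ∀ i j, i ≠ j → List.Disjoint (P i).2.2.support (P j).2.2.support

/-- A graph is one-ended if it has a ray and any two rays are equivalent. -/
def OneEnded (G : Multigraph V E) : Prop :=
  Nonempty G.Ray ∧ ∀ R R' : G.Ray, G.RayEquiv R R'

end Multigraph
/-- A multigraph on the vertex type `W`, with its edge type bundled. -/
structure GraphOn (W : Type u) : Type (u + 1) where
  E : Type u
  graph : Multigraph W E

namespace Multigraph

variable {W F : Type u}

/-- The graph obtained from `G` by lifting the pair of edges `e₁, e₂` at `s`: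
delete `e₁` and `e₂`, and add an edge between their non-`s` endpoints if these differ
(nothing is added if they coincide). -/
noncomputable def lift (G : Multigraph W F) (s : W) (e₁ e₂ : F) : GraphOn W where
  E := {e : F // e ≠ e₁ ∧ e ≠ e₂} ⊕ {_p : PUnit.{u + 1} // G.other s e₁ ≠ G.other s e₂}
  graph :=
    { fst := Sum.elim (fun e => G.fst e.1) fun _ => G.other s e₁
      snd := Sum.elim (fun e => G.snd e.1) fun _ => G.other s e₂
      loopless := by
        rintro (e | p)
        · exact G.loopless e.1
        · exact p.2 }

/-- The pair of edges `e₁, e₂` incident with `s` is `k`-liftable: after lifting it,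
there are `k` pairwise edge-disjoint paths between any two vertices different from `s`. -/
def IsLiftable (G : Multigraph W F) (s : W) (k : ℕ) (e₁ e₂ : F) : Prop :=
  e₁ ≠ e₂ ∧ G.IncVert s e₁ ∧ G.IncVert s e₂ ∧ (G.lift s e₁ e₂).graph.SEdgeConnected s k

/-- The `k`-lifting graph `L(G, s, k)`: vertices are the edges of `G` incident with `s`,
two being adjacent iff they form a `k`-liftable pair. -/
noncomputable def liftingGraph (G : Multigraph W F) (s : W) (k : ℕ) :
    SimpleGraph {e : F // G.IncVert s e} :=
  SimpleGraph.fromRel fun e f => G.IsLiftable s k e.1 f.1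

end Multigraph

/-- `x` is an isolated vertex of the simple graph `L`. -/
def SimpleGraph.IsIsolatedVertex {α : Type*} (L : SimpleGraph α) (x : α) : Prop :=
  ∀ y, ¬ L.Adj x y

/-- `L` is the union of an isolated vertex and a balanced complete bipartite graph. -/
def SimpleGraph.IsIsolatedPlusBalancedCompleteBipartite {α : Type*} (L : SimpleGraph α) : Prop :=
  ∃ (x : α) (A B : Set α),
    x ∉ A ∧ x ∉ B ∧ A ∩ B = ∅ ∧ A ∪ B = {x}ᶜ ∧ A.ncard = B.ncard ∧
      ∀ a b, L.Adj a b ↔ (a ∈ A ∧ b ∈ B) ∨ (a ∈ B ∧ b ∈ A)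


namespace MGAux

open Multigraph

variable {V E : Type}

/-! ### Basic facts about endpoints -/

theorem other_ne (G : Multigraph V E) {s : V} {e : E} (h : G.IncVert s e) :
    G.other s e ≠ s := by
  classical
  unfold Multigraph.other
  split_ifs with h1
  · intro h2; exact G.loopless e (h1.trans h2.symm)
  · intro h2
    rcases h with h | h
    · exact h1 h
    · exact G.loopless e (h2.trans h.symm)

theorem inc_other (G : Multigraph V E) {s : V} {e : E} (h : G.IncVert s e) :
    G.Inc e s (G.other s e) := by
  classical
  unfold Multigraph.other
  split_ifs with h1
  · exact Or.inl ⟨h1, rfl⟩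
  · rcases h with h | h
    · exact absurd h h1
    · exact Or.inr ⟨rfl, h⟩

theorem mem_edgeCut_of_inc (G : Multigraph V E) {S : Set V} {e : E} {a b : V}
    (h : G.Inc e a b) (ha : a ∈ S) (hb : b ∉ S) : e ∈ G.edgeCut S := by
  rcases h with ⟨h1, h2⟩ | ⟨h1, h2⟩
  · exact Or.inl ⟨h1 ▸ ha, h2 ▸ hb⟩
  · exact Or.inr ⟨h1 ▸ hb, h2 ▸ ha⟩

theorem edgeCut_compl (G : Multigraph V E) (S : Set V) : G.edgeCut Sᶜ = G.edgeCut S := by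
  ext e
  simp only [Multigraph.edgeCut, Set.mem_setOf_eq, Set.mem_compl_iff, not_not]
  tauto

/-- Every walk from inside `S` to outside `S` contains an edge of the cut. -/
theorem walk_crossing (G : Multigraph V E) {S : Set V} :
    ∀ {a b : V} (W : G.Walk a b), a ∈ S → b ∉ S → ∃ e ∈ W.edges, e ∈ G.edgeCut S := by
  intro a b W
  induction W with
  | nil x => intro h1 h2; exact absurd h1 h2
  | @cons x' z' b' e h p ih =>
    intro h1 h2
    by_cases hz : z' ∈ S
    · obtain ⟨f, hf1, hf2⟩ := ih hz h2
      exact ⟨f, List.mem_cons_of_mem _ hf1, hf2⟩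
    · exact ⟨e, List.mem_cons_self, mem_edgeCut_of_inc G h h1 hz⟩

/-- Easy direction of Menger: `k` edge-disjoint paths force every cut to have
at least `k` edges. -/
theorem le_ncard_edgeCut_of_paths [Finite E] (G : Multigraph V E) {S : Set V} {a b : V} {k : ℕ}
    (hP : G.EdgeDisjointPaths k a b) (ha : a ∈ S) (hb : b ∉ S) :
    k ≤ (G.edgeCut S).ncard := by
  classical
  obtain ⟨P, _, hdisj⟩ := hP
  choose f hf1 hf2 using fun i => walk_crossing G (P i) ha hb
  have hinj : Function.Injective f := by
    intro i j hij
    by_contra hne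
    exact (hdisj i j hne) (hf1 i) (hij ▸ hf1 j)
  have : Set.range f ⊆ G.edgeCut S := by rintro _ ⟨i, rfl⟩; exact hf2 i
  calc k = (Set.range f).ncard := by
            rw [← Nat.card_coe_set_eq, Nat.card_range_of_injective hinj, Nat.card_eq_fintype_card,
              Fintype.card_fin]
       _ ≤ (G.edgeCut S).ncard := Set.ncard_le_ncard this (Set.toFinite _)

/-! ### Generic walks along an edge-labelled relation -/

/-- Walks whose steps are witnessed by edges satisfying relation `R`. -/
inductive EWalk (R : E → V → V → Prop) : V → V → Type
  | nil (x : V) : EWalk R x x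
  | cons {x y z : V} (e : E) (h : R e x y) (p : EWalk R y z) : EWalk R x z

namespace EWalk

variable {R : E → V → V → Prop}

def support : ∀ {x y : V}, EWalk R x y → List V
  | _, y, .nil _ => [y]
  | x, _, .cons _ _ p => x :: support p

def edges : ∀ {x y : V}, EWalk R x y → List E
  | _, _, .nil _ => []
  | _, _, .cons e _ p => e :: edges p

theorem start_mem_support : ∀ {x y : V} (p : EWalk R x y), x ∈ p.support
  | _, _, .nil _ => List.mem_singleton_self _
  | _, _, .cons _ _ _ => List.mem_cons_self

theorem end_mem_support : ∀ {x y : V} (p : EWalk R x y), y ∈ p.support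
  | _, _, .nil _ => List.mem_singleton_self _
  | _, _, .cons _ _ p => List.mem_cons_of_mem _ (end_mem_support p)

/-- Concatenate a step at the end. -/
def snoc : ∀ {x y z : V}, EWalk R x y → (e : E) → R e y z → EWalk R x z
  | _, _, _, .nil _, e, h => .cons e h (.nil _)
  | _, _, _, .cons f hf p, e, h => .cons f hf (snoc p e h)

theorem exists_of_reflTransGen {x y : V}
    (h : Relation.ReflTransGen (fun a b => ∃ e, R e a b) x y) :
    Nonempty (EWalk R x y) := by
  induction h with
  | refl => exact ⟨.nil x⟩
  | tail _ hstep ih =>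
    obtain ⟨e, he⟩ := hstep
    obtain ⟨p⟩ := ih
    exact ⟨p.snoc e he⟩

open Classical in
/-- Drop the initial part of a walk until the first occurrence of `u`. -/
noncomputable def dropUntil {u : V} : ∀ {x y : V} (p : EWalk R x y), u ∈ p.support → EWalk R u y
  | _, y, .nil _, h => by
      have : u = y := List.mem_singleton.mp h
      exact this ▸ .nil u
  | x, y, .cons e he p, h =>
      if hx : u = x then hx ▸ .cons e he p
      else p.dropUntil (by
        rcases List.mem_cons.mp h with h' | h'
        · exact absurd h' hx
        · exact h')

theorem dropUntil_support_sublist {u : V} :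
    ∀ {x y : V} (p : EWalk R x y) (h : u ∈ p.support),
      (p.dropUntil h).support.Sublist p.support
  | _, y, .nil _, h => by
      have hu : u = y := List.mem_singleton.mp h
      subst hu
      exact List.Sublist.refl _
  | x, y, .cons e he p, h => by
      unfold dropUntil
      split_ifs with hx
      · subst hx; exact List.Sublist.refl _
      · exact (dropUntil_support_sublist p _).trans (List.sublist_cons_self _ _)

theorem dropUntil_edges_subset {u : V} :
    ∀ {x y : V} (p : EWalk R x y) (h : u ∈ p.support),
      ∀ e ∈ (p.dropUntil h).edges, e ∈ p.edges
  | _, y, .nil _, h => by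
      have hu : u = y := List.mem_singleton.mp h
      subst hu; intro e he; exact he
  | x, y, .cons e he p, h => by
      unfold dropUntil
      split_ifs with hx
      · subst hx; intro f hf; exact hf
      · intro f hf
        exact List.mem_cons_of_mem _ (dropUntil_edges_subset p _ f hf)

/-- Every walk contains a walk with no repeated vertices (same endpoints,
using a subset of the edges). -/
theorem exists_nodup_support :
    ∀ {x y : V} (p : EWalk R x y),
      ∃ q : EWalk R x y, q.support.Nodup ∧ ∀ e ∈ q.edges, e ∈ p.edges := by
  intro x y p
  induction p with
  | nil x => exact ⟨.nil x, List.nodup_singleton _, fun e he => he⟩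
  | @cons x m y e he p ih =>
    obtain ⟨q, hq1, hq2⟩ := ih
    by_cases hx : x ∈ q.support
    · refine ⟨q.dropUntil hx, ((dropUntil_support_sublist q hx).nodup hq1 : _), ?_⟩
      intro f hf
      exact List.mem_cons_of_mem _ (hq2 f (dropUntil_edges_subset q hx f hf))
    · refine ⟨.cons e he q, ?_, ?_⟩
      · exact List.nodup_cons.mpr ⟨hx, hq1⟩
      · intro f hf
        rcases List.mem_cons.mp hf with rfl | hf'
        · exact List.mem_cons_self
        · exact List.mem_cons_of_mem _ (hq2 f hf')

end EWalk

end MGAux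

/-! ### Flows and the max-flow min-cut argument (hard Menger) -/

namespace MGAux

open Multigraph Finset

variable {V E : Type}

section Flow

variable (G : Multigraph V E)

/-- Endpoint selector: `ept G e true = fst`, `ept G e false = snd`. -/
def ept (e : E) (b : Bool) : V := cond b (G.fst e) (G.snd e)

@[simp] theorem ept_true (e : E) : ept G e true = G.fst e := rfl
@[simp] theorem ept_false (e : E) : ept G e false = G.snd e := rfl

theorem ept_ne (e : E) (b : Bool) : ept G e b ≠ ept G e (!b) := by
  cases b
  · exact (G.loopless e).symm
  · exact G.loopless e

theorem inc_ept (e : E) (b : Bool) : G.Inc e (ept G e b) (ept G e (!b)) := by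
  cases b
  · exact Or.inr ⟨rfl, rfl⟩
  · exact Or.inl ⟨rfl, rfl⟩

open Classical in
/-- Contribution of an edge-state to the excess at `v`. -/
noncomputable def cval (o : Option Bool) (e : E) (v : V) : ℤ :=
  match o with
  | none => 0
  | some b => (if ept G e b = v then 1 else 0) - (if ept G e (!b) = v then 1 else 0)

variable [Fintype E]

/-- Excess of a flow at a vertex. -/
noncomputable def Exc (σ : E → Option Bool) (v : V) : ℤ := ∑ e : E, cval G (σ e) e v

variable (x y : V)

/-- A flow from `x` to `y`: zero excess away from `x` and `y`. -/
def IsFlow (σ : E → Option Bool) : Prop := ∀ v, v ≠ x → v ≠ y → Exc G σ v = 0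

/-- Residual traversal of edge `e` from `a` to `b`. -/
def ResVia (σ : E → Option Bool) (e : E) (a b : V) : Prop :=
  (σ e = none ∧ G.Inc e a b) ∨ (∃ bb, σ e = some bb ∧ ept G e bb = b ∧ ept G e (!bb) = a)

/-- Flow traversal of edge `e` from `a` to `b`. -/
def FVia (σ : E → Option Bool) (e : E) (a b : V) : Prop :=
  ∃ bb, σ e = some bb ∧ ept G e bb = a ∧ ept G e (!bb) = b

theorem ResVia.inc {σ e a b} (h : ResVia G σ e a b) : G.Inc e a b := by
  rcases h with ⟨_, h⟩ | ⟨bb, _, h1, h2⟩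
  · exact h
  · rcases inc_ept G e bb with ⟨u1, u2⟩ | ⟨u1, u2⟩
    · exact Or.inr ⟨u1.trans h1, u2.trans h2⟩
    · exact Or.inl ⟨u1.trans h2, u2.trans h1⟩

theorem FVia.inc {σ e a b} (h : FVia G σ e a b) : G.Inc e a b := by
  rcases h with ⟨bb, _, h1, h2⟩
  rcases inc_ept G e bb with ⟨u1, u2⟩ | ⟨u1, u2⟩
  · exact Or.inl ⟨u1.trans h1, u2.trans h2⟩
  · exact Or.inr ⟨u1.trans h2, u2.trans h1⟩

end Flow

/-! ### Generic lemmas about `EWalk` in a multigraph -/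

namespace EWalk

variable {G : Multigraph V E} {R : E → V → V → Prop}

theorem endpoints_mem_support (hR : ∀ e a b, R e a b → G.Inc e a b) :
    ∀ {x y : V} (p : EWalk R x y), ∀ e ∈ p.edges,
      G.fst e ∈ p.support ∧ G.snd e ∈ p.support := by
  intro x y p
  induction p with
  | nil x => intro e he; simp [edges] at he
  | @cons x m z e h p ih =>
    intro f hf
    rcases List.mem_cons.mp hf with rfl | hf'
    · rcases hR f x m h with ⟨h1, h2⟩ | ⟨h1, h2⟩
      · constructor
        · rw [h1]; exact List.mem_cons_self
        · rw [h2]; exact List.mem_cons_of_mem _ (start_mem_support p)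
      · constructor
        · rw [h1]; exact List.mem_cons_of_mem _ (start_mem_support p)
        · rw [h2]; exact List.mem_cons_self
    · obtain ⟨h1, h2⟩ := ih f hf'
      exact ⟨List.mem_cons_of_mem _ h1, List.mem_cons_of_mem _ h2⟩

theorem edges_nodup_of_support_nodup (hR : ∀ e a b, R e a b → G.Inc e a b) :
    ∀ {x y : V} (p : EWalk R x y), p.support.Nodup → p.edges.Nodup := by
  intro x y p
  induction p with
  | nil x => intro _; exact List.nodup_nil
  | @cons x m z e h p ih =>
    intro hnd
    have hx : x ∉ p.support := (List.nodup_cons.mp hnd).1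
    have hnd' := (List.nodup_cons.mp hnd).2
    refine List.nodup_cons.mpr ⟨?_, ih hnd'⟩
    intro hmem
    obtain ⟨h1, h2⟩ := endpoints_mem_support hR p e hmem
    rcases hR e x m h with ⟨u1, u2⟩ | ⟨u1, u2⟩
    · exact hx (u1 ▸ h1)
    · exact hx (u2 ▸ h2)

theorem exists_rel_of_mem_edges :
    ∀ {x y : V} (p : EWalk R x y), ∀ e ∈ p.edges, ∃ a b, R e a b := by
  intro x y p
  induction p with
  | nil x => intro e he; simp [edges] at he
  | @cons x m z e h p ih =>
    intro f hf
    rcases List.mem_cons.mp hf with rfl | hf'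
    · exact ⟨_, _, h⟩
    · exact ih f hf'

/-- Convert an `EWalk` to a `Multigraph.Walk`. -/
def toWalk (hR : ∀ e a b, R e a b → G.Inc e a b) :
    ∀ {x y : V}, EWalk R x y → G.Walk x y
  | _, _, .nil x => .nil x
  | _, _, .cons e h p => .cons e (hR _ _ _ h) (toWalk hR p)

theorem toWalk_support (hR : ∀ e a b, R e a b → G.Inc e a b) :
    ∀ {x y : V} (p : EWalk R x y), (p.toWalk hR).support = p.support
  | _, _, .nil x => rfl
  | _, _, .cons e h p => by
      simp [toWalk, Walk.support, support, toWalk_support hR p]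

theorem toWalk_edges (hR : ∀ e a b, R e a b → G.Inc e a b) :
    ∀ {x y : V} (p : EWalk R x y), (p.toWalk hR).edges = p.edges
  | _, _, .nil x => rfl
  | _, _, .cons e h p => by
      simp [toWalk, Walk.edges, edges, toWalk_edges hR p]

/-- Rewrite a flow along a walk: at each step the traversed edge `e` (from `a` to `b`)
is assigned the new state `F e a b`. -/
def applyF [DecidableEq E] (F : E → V → V → Option Bool) :
    ∀ {x y : V}, EWalk R x y → (E → Option Bool) → (E → Option Bool)
  | _, _, .nil _, τ => τ
  | _, _, .cons e (x := a) (y := b) _ p, τ => applyF F p (Function.update τ e (F e a b))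

theorem applyF_of_not_mem [DecidableEq E] (F : E → V → V → Option Bool) :
    ∀ {x y : V} (p : EWalk R x y) (τ : E → Option Bool) (e : E), e ∉ p.edges →
      applyF F p τ e = τ e := by
  intro x y p
  induction p with
  | nil x => intro τ e _; rfl
  | @cons x m z f h p ih =>
    intro τ e he
    have h1 : e ∉ p.edges := fun hc => he (List.mem_cons_of_mem _ hc)
    have h2 : e ≠ f := fun hc => he (hc ▸ List.mem_cons_self)
    rw [applyF, ih _ _ h1, Function.update_of_ne h2]

end EWalk

section FlowLemmas

variable (G : Multigraph V E) [Fintype E]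

theorem exc_update [DecidableEq E] (τ : E → Option Bool) (e : E) (ov : Option Bool) (v : V) :
    Exc G (Function.update τ e ov) v = Exc G τ v - cval G (τ e) e v + cval G ov e v := by
  classical
  unfold Exc
  rw [← Finset.sum_erase_add (Finset.univ : Finset E) _ (Finset.mem_univ e),
    ← Finset.sum_erase_add (Finset.univ : Finset E) (fun f => cval G (τ f) f v) (Finset.mem_univ e)]
  have : ∀ f ∈ Finset.univ.erase e, cval G (Function.update τ e ov f) f v = cval G (τ f) f v := by
    intro f hf
    rw [Function.update_of_ne (Finset.mem_erase.mp hf).1]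
  rw [Finset.sum_congr rfl this, Function.update_self]
  ring

/-- The master recomputation lemma: rewriting a flow along a walk changes the excess
as prescribed by the per-edge change function `D`. -/
theorem exc_applyF [DecidableEq E] (R : E → V → V → Prop) (σ : E → Option Bool)
    (F : E → V → V → Option Bool) (D : V → V → ℤ)
    (hF : ∀ e a b, R e a b → ∀ v, cval G (F e a b) e v = cval G (σ e) e v + D a v - D b v) :
    ∀ {x y : V} (p : EWalk R x y), p.edges.Nodup →
      ∀ (τ : E → Option Bool), (∀ e ∈ p.edges, τ e = σ e) →
      ∀ v, Exc G (EWalk.applyF F p τ) v = Exc G τ v + D x v - D y v := by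
  intro x y p
  induction p with
  | nil x => intro _ τ _ v; simp [EWalk.applyF]
  | @cons x m z e h p ih =>
    intro hnd τ hτ v
    have hnd' : p.edges.Nodup := (List.nodup_cons.mp hnd).2
    have hem : e ∉ p.edges := (List.nodup_cons.mp hnd).1
    rw [EWalk.applyF]
    have hτ' : ∀ f ∈ p.edges, Function.update τ e (F e x m) f = σ f := by
      intro f hf
      rw [Function.update_of_ne (fun hc => hem (by rw [← hc]; exact hf)),
        hτ f (List.mem_cons_of_mem _ hf)]
    rw [ih hnd' _ hτ' v, exc_update, hτ e (List.mem_cons_self), hF e x m h v]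
    ring

variable (x y : V)

/-- Residual reachability. -/
def RReach (σ : E → Option Bool) (a b : V) : Prop :=
  Relation.ReflTransGen (fun u w => ∃ e, ResVia G σ e u w) a b

open Classical in
/-- Augmentation: a residual walk from `x` to `y` increases the flow value by one. -/
theorem augment (σ : E → Option Bool) (hσ : IsFlow G x y σ) (hxy : x ≠ y)
    (hreach : RReach G σ x y) :
    ∃ σ', IsFlow G x y σ' ∧ Exc G σ' x = Exc G σ x + 1 := by
  classical
  obtain ⟨p0⟩ := EWalk.exists_of_reflTransGen hreach
  obtain ⟨p, hnd, _⟩ := EWalk.exists_nodup_support p0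
  have hinc : ∀ e a b, ResVia G σ e a b → G.Inc e a b := fun e a b h => h.inc
  have hed : p.edges.Nodup := EWalk.edges_nodup_of_support_nodup hinc p hnd
  set F : E → V → V → Option Bool := fun e a _ =>
    if σ e = none then some (if G.fst e = a then true else false) else none with hFdef
  have hF : ∀ e a b, ResVia G σ e a b → ∀ v,
      cval G (F e a b) e v = cval G (σ e) e v
        + (if a = v then (1:ℤ) else 0) - (if b = v then (1:ℤ) else 0) := by
    intro e a b h v
    rcases h with ⟨h0, hinc'⟩ | ⟨bb, hs, h1, h2⟩
    · rcases hinc' with ⟨u1, u2⟩ | ⟨u1, u2⟩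
      · subst u1; subst u2
        have hv : F e (G.fst e) (G.snd e) = some true := by simp [hFdef, h0]
        rw [hv, h0]
        simp only [cval, Bool.not_true, ept_true, ept_false]
        by_cases hv1 : G.fst e = v <;> by_cases hv2 : G.snd e = v <;> simp [hv1, hv2]
      · subst u1; subst u2
        have hv : F e (G.snd e) (G.fst e) = some false := by
          simp [hFdef, h0, G.loopless e]
        rw [hv, h0]
        simp only [cval, Bool.not_false, ept_true, ept_false]
        by_cases hv1 : G.fst e = v <;> by_cases hv2 : G.snd e = v <;> simp [hv1, hv2]
    · subst h1; subst h2
      have hv : F e (ept G e (!bb)) (ept G e bb) = none := by simp [hFdef, hs]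
      rw [hv, hs]
      simp only [cval]
      ring
  have key := exc_applyF G (ResVia G σ) σ F
    (fun a v => if a = v then (1:ℤ) else 0) hF p hed σ (fun _ _ => rfl)
  refine ⟨EWalk.applyF F p σ, ?_, ?_⟩
  · intro v hvx hvy
    rw [key v, hσ v hvx hvy]
    simp [Ne.symm hvx, Ne.symm hvy]
  · rw [key x]
    simp [Ne.symm hxy]

end FlowLemmas

end MGAux

namespace MGAux

open Multigraph Finset

variable {V E : Type}

section MaxFlow

variable (G : Multigraph V E) [Fintype V] [Fintype E]

open Classical

noncomputable def OutCross (σ : E → Option Bool) (S : Set V) : Finset E :=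
  Finset.univ.filter fun e => ∃ bb, σ e = some bb ∧ ept G e bb ∈ S ∧ ept G e (!bb) ∉ S

noncomputable def InCross (σ : E → Option Bool) (S : Set V) : Finset E :=
  Finset.univ.filter fun e => ∃ bb, σ e = some bb ∧ ept G e bb ∉ S ∧ ept G e (!bb) ∈ S

theorem sum_exc (σ : E → Option Bool) (S : Set V) :
    ∑ v ∈ Finset.univ.filter (fun v => v ∈ S), Exc G σ v =
      ((OutCross G σ S).card : ℤ) - ((InCross G σ S).card : ℤ) := by
  unfold Exc
  rw [Finset.sum_comm]
  have key : ∀ e : E, ∑ v ∈ Finset.univ.filter (fun v => v ∈ S), cval G (σ e) e v =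
      (if e ∈ OutCross G σ S then (1:ℤ) else 0) - (if e ∈ InCross G σ S then (1:ℤ) else 0) := by
    intro e
    have hmem : ∀ w : V, w ∈ Finset.univ.filter (fun v => v ∈ S) ↔ w ∈ S := by
      intro w; simp
    cases hσe : σ e with
    | none =>
      have h1 : e ∉ OutCross G σ S := by simp [OutCross, hσe]
      have h2 : e ∉ InCross G σ S := by simp [InCross, hσe]
      simp [cval, h1, h2]
    | some bb =>
      have hsum : ∑ v ∈ Finset.univ.filter (fun v => v ∈ S), cval G (some bb) e v =
          (if ept G e bb ∈ S then (1:ℤ) else 0) - (if ept G e (!bb) ∈ S then (1:ℤ) else 0) := by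
        simp only [cval]
        rw [Finset.sum_sub_distrib, Finset.sum_ite_eq, Finset.sum_ite_eq]
        rw [if_congr (hmem _) rfl rfl, if_congr (hmem _) rfl rfl]
      rw [hsum]
      have hout : e ∈ OutCross G σ S ↔ (ept G e bb ∈ S ∧ ept G e (!bb) ∉ S) := by
        cases bb <;> simp [OutCross, hσe]
      have hin : e ∈ InCross G σ S ↔ (ept G e bb ∉ S ∧ ept G e (!bb) ∈ S) := by
        cases bb <;> simp [InCross, hσe]
      by_cases h1 : ept G e bb ∈ S <;> by_cases h2 : ept G e (!bb) ∈ S <;>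
        simp [h1, h2, hout, hin]
  rw [Finset.sum_congr rfl (fun e _ => key e), Finset.sum_sub_distrib]
  simp [Finset.sum_boole, OutCross, InCross]

theorem exc_eq_sum (σ : E → Option Bool) {x y : V} (hσ : IsFlow G x y σ) {S : Set V}
    (hx : x ∈ S) (hy : y ∉ S) :
    Exc G σ x = ((OutCross G σ S).card : ℤ) - ((InCross G σ S).card : ℤ) := by
  rw [← sum_exc]
  refine (Finset.sum_eq_single_of_mem x (by simp [hx]) ?_).symm
  intro v hv hvx
  have hvS : v ∈ S := by simpa using hv
  exact hσ v hvx (fun hc => hy (hc ▸ hvS))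

theorem exc_le_card (σ : E → Option Bool) (v : V) :
    Exc G σ v ≤ (Fintype.card E : ℤ) := by
  unfold Exc
  calc ∑ e : E, cval G (σ e) e v ≤ ∑ _e : E, (1:ℤ) := by
        refine Finset.sum_le_sum fun e _ => ?_
        cases σ e with
        | none => simp [cval]
        | some bb => by_cases h1 : ept G e bb = v <;> by_cases h2 : ept G e (!bb) = v <;>
            simp [cval, h1, h2]
    _ = (Fintype.card E : ℤ) := by simp

theorem exists_maxflow {x y : V} (hxy : x ≠ y) :
    ∃ σ, IsFlow G x y σ ∧ ¬ RReach G σ x y := by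
  have main : ∀ n : ℕ, ∀ σ, IsFlow G x y σ → (Fintype.card E : ℤ) ≤ Exc G σ x + n →
      ∃ σ', IsFlow G x y σ' ∧ ¬ RReach G σ' x y := by
    intro n
    induction n with
    | zero =>
      intro σ hσ hb
      by_cases hr : RReach G σ x y
      · obtain ⟨σ', h1, h2⟩ := augment G x y σ hσ hxy hr
        have := exc_le_card G σ' x
        simp only [Nat.cast_zero, add_zero] at hb
        omega
      · exact ⟨σ, hσ, hr⟩
    | succ n ih =>
      intro σ hσ hb
      by_cases hr : RReach G σ x y
      · obtain ⟨σ', h1, h2⟩ := augment G x y σ hσ hxy hr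
        refine ih σ' h1 ?_
        push_cast at hb ⊢
        omega
      · exact ⟨σ, hσ, hr⟩
  refine main (Fintype.card E) (fun _ => none) ?_ ?_
  · intro v _ _; simp [Exc, cval]
  · simp [Exc, cval]

/-- At a maximum flow, the flow value dominates every cut requirement. -/
theorem maxflow_value {x y : V} (σ : E → Option Bool) (hσ : IsFlow G x y σ)
    (hmax : ¬ RReach G σ x y) {k : ℕ}
    (hcut : ∀ S : Set V, x ∈ S → y ∉ S → k ≤ (G.edgeCut S).ncard) :
    (k : ℤ) ≤ Exc G σ x := by
  set S : Set V := {v | RReach G σ x v} with hS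
  have hx : x ∈ S := Relation.ReflTransGen.refl
  have hy : y ∉ S := hmax
  have hclosed : ∀ a b, a ∈ S → (∃ e, ResVia G σ e a b) → b ∈ S := by
    intro a b ha hab
    exact Relation.ReflTransGen.tail ha hab
  have hin : InCross G σ S = ∅ := by
    rw [Finset.eq_empty_iff_forall_notMem]
    intro e he
    obtain ⟨bb, hs, h1, h2⟩ := (Finset.mem_filter.mp he).2
    exact h1 (hclosed _ _ h2 ⟨e, Or.inr ⟨bb, hs, rfl, rfl⟩⟩)
  have hout : OutCross G σ S = (G.edgeCut S).toFinset := by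
    ext e
    simp only [Set.mem_toFinset]
    constructor
    · intro he
      obtain ⟨bb, hs, h1, h2⟩ := (Finset.mem_filter.mp he).2
      cases bb
      · exact Or.inr ⟨h2, h1⟩
      · exact Or.inl ⟨h1, h2⟩
    · intro he
      have hne : σ e ≠ none := by
        intro h0
        rcases he with ⟨h1, h2⟩ | ⟨h1, h2⟩
        · exact h2 (hclosed _ _ h1 ⟨e, Or.inl ⟨h0, Or.inl ⟨rfl, rfl⟩⟩⟩)
        · exact h1 (hclosed _ _ h2 ⟨e, Or.inl ⟨h0, Or.inr ⟨rfl, rfl⟩⟩⟩)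
      cases hσe : σ e with
      | none => exact absurd hσe hne
      | some bb =>
        have hcross : (ept G e bb ∈ S ∧ ept G e (!bb) ∉ S) ∨
            (ept G e bb ∉ S ∧ ept G e (!bb) ∈ S) := by
          rcases he with ⟨h1, h2⟩ | ⟨h1, h2⟩ <;> cases bb <;>
            simp only [ept_true, ept_false, Bool.not_true, Bool.not_false] <;> tauto
        rcases hcross with ⟨h1, h2⟩ | ⟨h1, h2⟩
        · exact Finset.mem_filter.mpr ⟨Finset.mem_univ _, bb, hσe, h1, h2⟩
        · exact absurd (hclosed _ _ h2 ⟨e, Or.inr ⟨bb, hσe, rfl, rfl⟩⟩) h1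
  rw [exc_eq_sum G σ hσ hx hy, hin, hout]
  have := hcut S hx hy
  rw [Set.ncard_eq_toFinset_card'] at this
  simp only [Finset.card_empty, Nat.cast_zero, sub_zero]
  exact_mod_cast this

theorem exists_flowpath {x y : V} (σ : E → Option Bool) (hσ : IsFlow G x y σ)
    (hpos : 1 ≤ Exc G σ x) :
    ∃ p : EWalk (FVia G σ) x y, p.support.Nodup := by
  set T : Set V := {v | Relation.ReflTransGen (fun a b => ∃ e, FVia G σ e a b) x v} with hT
  have hx : x ∈ T := Relation.ReflTransGen.refl
  by_cases hy : y ∈ T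
  · obtain ⟨p0⟩ := EWalk.exists_of_reflTransGen hy
    obtain ⟨p, hnd, _⟩ := EWalk.exists_nodup_support p0
    exact ⟨p, hnd⟩
  · exfalso
    have hout : OutCross G σ T = ∅ := by
      rw [Finset.eq_empty_iff_forall_notMem]
      intro e he
      obtain ⟨bb, hs, h1, h2⟩ := (Finset.mem_filter.mp he).2
      exact h2 (Relation.ReflTransGen.tail h1 ⟨e, bb, hs, rfl, rfl⟩)
    have := exc_eq_sum G σ hσ hx hy
    rw [hout] at this
    simp at this
    omega

open Classical in
theorem applyF_none (σ : E → Option Bool) :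
    ∀ {x y : V} (p : EWalk (FVia G σ) x y) (τ : E → Option Bool) (e : E),
      EWalk.applyF (fun _ _ _ => none) p τ e = if e ∈ p.edges then none else τ e := by
  intro x y p
  induction p with
  | nil x => intro τ e; simp [EWalk.applyF, EWalk.edges]
  | @cons x m z f h p ih =>
    intro τ e
    rw [EWalk.applyF, ih]
    by_cases h1 : e ∈ p.edges
    · simp [h1, EWalk.edges]
    · by_cases h2 : e = f
      · subst h2
        simp [h1, EWalk.edges, Function.update_self]
      · simp [h1, h2, EWalk.edges, Function.update_of_ne h2]

theorem extract_paths {x y : V} (hxy : x ≠ y) :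
    ∀ (k : ℕ) (σ : E → Option Bool), IsFlow G x y σ → (k : ℤ) ≤ Exc G σ x →
      ∃ P : Fin k → G.Walk x y, (∀ i, (P i).IsPath) ∧
        (∀ i j, i ≠ j → List.Disjoint (P i).edges (P j).edges) ∧
        (∀ i, ∀ e ∈ (P i).edges, σ e ≠ none) := by
  intro k
  induction k with
  | zero =>
    intro σ _ _
    exact ⟨fun i => i.elim0, fun i => i.elim0, fun i => i.elim0, fun i => i.elim0⟩
  | succ k ih =>
    intro σ hσ hval
    classical
    have hpos : 1 ≤ Exc G σ x := by
      have : (0:ℤ) ≤ (k:ℤ) := Int.natCast_nonneg k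
      push_cast at hval
      omega
    obtain ⟨p, hnd⟩ := exists_flowpath G σ hσ hpos
    have hFinc : ∀ e a b, FVia G σ e a b → G.Inc e a b := fun e a b h => h.inc
    have hed : p.edges.Nodup := EWalk.edges_nodup_of_support_nodup hFinc p hnd
    set σ' : E → Option Bool := EWalk.applyF (fun _ _ _ => none) p σ with hσ'def
    have hD : ∀ e a b, FVia G σ e a b → ∀ v,
        cval G ((fun (_:E) (_:V) (_:V) => (none : Option Bool)) e a b) e v =
          cval G (σ e) e v + (-(if a = v then (1:ℤ) else 0)) - (-(if b = v then (1:ℤ) else 0)) := by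
      intro e a b h v
      obtain ⟨bb, hs, h1, h2⟩ := h
      subst h1; subst h2
      rw [hs]
      simp only [cval]
      ring
    have key := exc_applyF G (FVia G σ) σ (fun _ _ _ => none)
      (fun a v => -(if a = v then (1:ℤ) else 0)) hD p hed σ (fun _ _ => rfl)
    have hflow' : IsFlow G x y σ' := by
      intro v hvx hvy
      rw [hσ'def, key v, hσ v hvx hvy]
      simp [Ne.symm hvx, Ne.symm hvy]
    have hval' : (k:ℤ) ≤ Exc G σ' x := by
      rw [hσ'def, key x]
      simp only [if_pos rfl, if_neg (Ne.symm hxy)]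
      push_cast at hval
      omega
    have hσ'on : ∀ e ∈ p.edges, σ' e = none := by
      intro e he
      rw [hσ'def, applyF_none G σ p σ e, if_pos he]
    have hσ'off : ∀ e, e ∉ p.edges → σ' e = σ e := by
      intro e he
      rw [hσ'def, applyF_none G σ p σ e, if_neg he]
    obtain ⟨P', hP1, hP2, hP3⟩ := ih σ' hflow' hval'
    set W : G.Walk x y := p.toWalk hFinc with hWdef
    have hWsupp : W.support = p.support := EWalk.toWalk_support hFinc p
    have hWedges : W.edges = p.edges := EWalk.toWalk_edges hFinc p
    have hWpath : W.IsPath := by rw [Walk.IsPath, hWsupp]; exact hnd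
    have hWflow : ∀ e ∈ W.edges, σ e ≠ none := by
      intro e he
      rw [hWedges] at he
      obtain ⟨a, b, ⟨bb, hs, _, _⟩⟩ := EWalk.exists_rel_of_mem_edges p e he
      simp [hs]
    refine ⟨fun i => Fin.cases W P' i, ?_, ?_, ?_⟩
    · intro i
      induction i using Fin.cases with
      | zero => simpa using hWpath
      | succ i => simpa using hP1 i
    · intro i j hij
      induction i using Fin.cases with
      | zero =>
        induction j using Fin.cases with
        | zero => exact absurd rfl hij
        | succ j =>
          simp only [Fin.cases_zero, Fin.cases_succ]
          intro e he hef
          have h1 : σ' e = none := by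
            rw [hWedges] at he; exact hσ'on e he
          exact hP3 j e hef h1
      | succ i =>
        induction j using Fin.cases with
        | zero =>
          simp only [Fin.cases_zero, Fin.cases_succ]
          intro e he hef
          have h1 : σ' e = none := by
            rw [hWedges] at hef; exact hσ'on e hef
          exact hP3 i e he h1
        | succ j =>
          simp only [Fin.cases_succ]
          exact hP2 i j (fun hc => hij (hc ▸ rfl))
    · intro i
      induction i using Fin.cases with
      | zero => simpa using hWflow
      | succ i =>
        simp only [Fin.cases_succ]
        intro e he
        have h1 : σ' e ≠ none := hP3 i e he
        have h2 : e ∉ p.edges := fun hc => h1 (hσ'on e hc)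
        rw [← hσ'off e h2]
        exact h1

end MaxFlow

/-- **Hard direction of Menger's theorem** (edge version, multigraphs):
if every cut separating `x` from `y` has at least `k` edges, then there are `k`
pairwise edge-disjoint paths from `x` to `y`. -/
theorem hardMenger [Finite V] [Finite E] (G : Multigraph V E) {x y : V} (hxy : x ≠ y) (k : ℕ)
    (hcut : ∀ S : Set V, x ∈ S → y ∉ S → k ≤ (G.edgeCut S).ncard) :
    G.EdgeDisjointPaths k x y := by
  classical
  have : Fintype V := Fintype.ofFinite V
  have : Fintype E := Fintype.ofFinite E
  obtain ⟨σ, hσ, hmax⟩ := exists_maxflow G hxy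
  have hval := maxflow_value G σ hσ hmax hcut
  obtain ⟨P, h1, h2, _⟩ := extract_paths G hxy k σ hσ hval
  exact ⟨P, h1, h2⟩

end MGAux

namespace MGAux

open Multigraph Finset

variable {V E : Type}

section Counting

open Classical

theorem ncard_eq_sum [Fintype E] (A : Set E) :
    A.ncard = ∑ e : E, (if e ∈ A then 1 else 0) := by
  classical
  rw [Set.ncard_eq_toFinset_card', Set.toFinset_card, Fintype.card_subtype, Finset.card_filter]

variable (G : Multigraph V E) [Fintype V] [Fintype E]

theorem degree_eq_sum (v : V) :
    G.degree v = ∑ e : E, (if G.IncVert v e then 1 else 0) := ncard_eq_sum _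

/-- In an Eulerian graph every cut is even. -/
theorem even_ncard_edgeCut (heuler : ∀ v : V, Even (G.degree v)) (S : Set V) :
    Even ((G.edgeCut S).ncard) := by
  classical
  have hdsum : Even (∑ v ∈ Finset.univ.filter (fun v => v ∈ S), G.degree v) :=
    Finset.even_sum _ (fun v _ => heuler v)
  have hswap : ∑ v ∈ Finset.univ.filter (fun v => v ∈ S), G.degree v =
      ∑ e : E, ((if G.fst e ∈ S then 1 else 0) + (if G.snd e ∈ S then 1 else 0)) := by
    have h1 : ∀ v ∈ Finset.univ.filter (fun v => v ∈ S),
        G.degree v = ∑ e : E, (if G.IncVert v e then 1 else 0) :=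
      fun v _ => degree_eq_sum G v
    rw [Finset.sum_congr rfl h1, Finset.sum_comm]
    refine Finset.sum_congr rfl fun e _ => ?_
    have hptwise : ∀ v, (if G.IncVert v e then (1:ℕ) else 0) =
        (if G.fst e = v then 1 else 0) + (if G.snd e = v then 1 else 0) := by
      intro v
      by_cases h1 : G.fst e = v <;> by_cases h2 : G.snd e = v
      · exact absurd (h1.trans h2.symm) (G.loopless e)
      all_goals simp [Multigraph.IncVert, h1, h2]
    rw [Finset.sum_congr rfl (fun v _ => hptwise v), Finset.sum_add_distrib,
      Finset.sum_ite_eq, Finset.sum_ite_eq]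
    simp
  have hkey : ∀ e : E, (if G.fst e ∈ S then (1:ℕ) else 0) + (if G.snd e ∈ S then 1 else 0) =
      (if e ∈ G.edgeCut S then 1 else 0) + 2 * (if G.fst e ∈ S ∧ G.snd e ∈ S then 1 else 0) := by
    intro e
    by_cases h1 : G.fst e ∈ S <;> by_cases h2 : G.snd e ∈ S <;>
      simp [Multigraph.edgeCut, h1, h2]
  rw [hswap, Finset.sum_congr rfl (fun e _ => hkey e), Finset.sum_add_distrib] at hdsum
  rw [ncard_eq_sum]
  rcases hdsum with ⟨r, hr⟩
  rw [← Finset.mul_sum] at hr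
  set a := ∑ e : E, (if e ∈ G.edgeCut S then (1:ℕ) else 0)
  set b := ∑ e : E, (if G.fst e ∈ S ∧ G.snd e ∈ S then (1:ℕ) else 0)
  exact ⟨r - b, by omega⟩

theorem submod_union_inter (X Y : Set V) :
    (G.edgeCut (X ∪ Y)).ncard + (G.edgeCut (X ∩ Y)).ncard ≤
      (G.edgeCut X).ncard + (G.edgeCut Y).ncard := by
  classical
  rw [ncard_eq_sum, ncard_eq_sum, ncard_eq_sum, ncard_eq_sum,
    ← Finset.sum_add_distrib, ← Finset.sum_add_distrib]
  refine Finset.sum_le_sum fun e _ => ?_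
  by_cases h1 : G.fst e ∈ X <;> by_cases h2 : G.fst e ∈ Y <;>
    by_cases h3 : G.snd e ∈ X <;> by_cases h4 : G.snd e ∈ Y <;>
    simp [Multigraph.edgeCut, Set.mem_union, Set.mem_inter_iff, h1, h2, h3, h4]

theorem posimod (X Y : Set V) :
    (G.edgeCut (X \ Y)).ncard + (G.edgeCut (Y \ X)).ncard +
      2 * ({e : E | (G.fst e ∈ X ∩ Y ∧ G.snd e ∉ X ∪ Y) ∨
        (G.snd e ∈ X ∩ Y ∧ G.fst e ∉ X ∪ Y)}.ncard) ≤
      (G.edgeCut X).ncard + (G.edgeCut Y).ncard := by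
  classical
  rw [ncard_eq_sum, ncard_eq_sum, ncard_eq_sum, ncard_eq_sum, ncard_eq_sum,
    ← Finset.sum_add_distrib, Finset.mul_sum, ← Finset.sum_add_distrib,
    ← Finset.sum_add_distrib]
  refine Finset.sum_le_sum fun e _ => ?_
  by_cases h1 : G.fst e ∈ X <;> by_cases h2 : G.fst e ∈ Y <;>
    by_cases h3 : G.snd e ∈ X <;> by_cases h4 : G.snd e ∈ Y <;>
    simp [Multigraph.edgeCut, Set.mem_union, Set.mem_inter_iff, Set.mem_diff, h1, h2, h3, h4]

end Counting

section LiftCut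

variable {G : Multigraph V E} {s : V} {e₁ e₂ : E}

theorem inc_symm {e : E} {a b : V} (h : G.Inc e a b) : G.Inc e b a := Or.symm h

theorem lift_inl_fst (e : {e : E // e ≠ e₁ ∧ e ≠ e₂}) :
    (G.lift s e₁ e₂).graph.fst (Sum.inl e) = G.fst e.1 := rfl

theorem lift_inl_snd (e : {e : E // e ≠ e₁ ∧ e ≠ e₂}) :
    (G.lift s e₁ e₂).graph.snd (Sum.inl e) = G.snd e.1 := rfl

variable [Finite E]

instance : Finite (G.lift s e₁ e₂).E := by
  unfold Multigraph.lift
  exact inferInstance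

/-- general lower bound: the lifted cut loses at most two edges. -/
theorem liftcut_ge_sub (S : Set V) :
    (G.edgeCut S).ncard ≤ ((G.lift s e₁ e₂).graph.edgeCut S).ncard + 2 := by
  classical
  have h1 : (G.edgeCut S).ncard ≤ (G.edgeCut S \ {e₁, e₂}).ncard + 2 := by
    have hsub : G.edgeCut S ⊆ (G.edgeCut S \ {e₁, e₂}) ∪ {e₁, e₂} := by
      intro e he
      by_cases h : e ∈ ({e₁, e₂} : Set E)
      · exact Or.inr h
      · exact Or.inl ⟨he, h⟩
    calc (G.edgeCut S).ncard ≤ ((G.edgeCut S \ {e₁, e₂}) ∪ {e₁, e₂}).ncard :=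
          Set.ncard_le_ncard hsub (Set.Finite.union (Set.toFinite _) (Set.toFinite _))
      _ ≤ (G.edgeCut S \ {e₁, e₂}).ncard + ({e₁, e₂} : Set E).ncard := Set.ncard_union_le _ _
      _ ≤ (G.edgeCut S \ {e₁, e₂}).ncard + 2 := by
          have : ({e₁, e₂} : Set E).ncard ≤ 2 := Set.ncard_insert_le _ _ |>.trans (by simp)
          omega
  refine h1.trans ?_
  have h2 : (G.edgeCut S \ {e₁, e₂}).ncard ≤ ((G.lift s e₁ e₂).graph.edgeCut S).ncard := by
    rw [← Nat.card_coe_set_eq, ← Nat.card_coe_set_eq]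
    have hinj : Function.Injective
        (fun a : ↥(G.edgeCut S \ {e₁, e₂}) =>
          (⟨Sum.inl ⟨a.1, not_or.mp a.2.2⟩, a.2.1⟩ :
            ↥((G.lift s e₁ e₂).graph.edgeCut S))) := by
      intro a b hab
      have h' := congrArg Subtype.val hab
      have h'' := Sum.inl.inj h'
      exact Subtype.ext (congrArg (fun z : {e : E // e ≠ e₁ ∧ e ≠ e₂} => z.1) h'')
    exact Nat.card_le_card_of_injective _ hinj
  omega

end LiftCut

end MGAux

namespace MGAux

open Multigraph

variable {V E : Type}

section LiftCut2

variable {G : Multigraph V E} {s : V} {e₁ e₂ : E} [Finite E]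

theorem mem_cut_of_incident {S : Set V} {e : E} (h : G.IncVert s e) (hs : s ∉ S)
    (ho : G.other s e ∈ S) : e ∈ G.edgeCut S :=
  mem_edgeCut_of_inc G (inc_symm (inc_other G h)) ho hs

theorem not_mem_cut_of_incident {S : Set V} {e : E} (h : G.IncVert s e) (hs : s ∉ S)
    (ho : G.other s e ∉ S) : e ∉ G.edgeCut S := by
  intro hmem
  rcases inc_other G h with ⟨u1, u2⟩ | ⟨u1, u2⟩ <;>
    rcases hmem with ⟨w1, w2⟩ | ⟨w1, w2⟩
  · exact hs (u1 ▸ w1)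
  · exact ho (u2 ▸ w2)
  · exact ho (u1 ▸ w1)
  · exact hs (u2 ▸ w2)

theorem liftcut_le_both {S : Set V} (hs : s ∉ S) (hne : e₁ ≠ e₂)
    (h1 : G.IncVert s e₁) (h2 : G.IncVert s e₂)
    (hu : G.other s e₁ ∈ S) (hv : G.other s e₂ ∈ S) :
    ((G.lift s e₁ e₂).graph.edgeCut S).ncard + 2 ≤ (G.edgeCut S).ncard := by
  classical
  have he₁ : e₁ ∈ G.edgeCut S := mem_cut_of_incident h1 hs hu
  have he₂ : e₂ ∈ G.edgeCut S := mem_cut_of_incident h2 hs hv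
  have hpair : ({e₁, e₂} : Set E) ⊆ G.edgeCut S := by
    intro e he
    simp only [Set.mem_insert_iff, Set.mem_singleton_iff] at he
    rcases he with rfl | rfl
    · exact he₁
    · exact he₂
  have hmain : ((G.lift s e₁ e₂).graph.edgeCut S).ncard ≤ (G.edgeCut S \ {e₁, e₂}).ncard := by
    rw [← Nat.card_coe_set_eq, ← Nat.card_coe_set_eq]
    have hval : ∀ a : ↥((G.lift s e₁ e₂).graph.edgeCut S),
        ∃ ee : {e : E // e ≠ e₁ ∧ e ≠ e₂}, a.1 = Sum.inl ee := by
      rintro ⟨a, ha⟩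
      cases a with
      | inl ee => exact ⟨ee, rfl⟩
      | inr p =>
        exfalso
        rcases ha with ⟨w1, w2⟩ | ⟨w1, w2⟩
        · exact w2 hv
        · exact w1 hu
    choose g hg using hval
    have hginc : ∀ a : ↥((G.lift s e₁ e₂).graph.edgeCut S),
        (g a).1 ∈ G.edgeCut S \ {e₁, e₂} := by
      intro a
      refine ⟨?_, by
        rintro (h | h)
        · exact (g a).2.1 h
        · exact (g a).2.2 (Set.mem_singleton_iff.mp h)⟩
      have := a.2
      rw [hg a] at this
      exact this
    have hinj : Function.Injective (fun a => (⟨(g a).1, hginc a⟩ :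
        ↥(G.edgeCut S \ {e₁, e₂}))) := by
      intro a b hab
      have h1' : (g a).1 = (g b).1 :=
        congrArg (fun z : ↥(G.edgeCut S \ {e₁, e₂}) => z.1) hab
      have h2' : g a = g b := Subtype.ext h1'
      apply Subtype.ext
      rw [hg a, hg b, h2']
    exact Nat.card_le_card_of_injective _ hinj
  have hdiff : (G.edgeCut S \ {e₁, e₂}).ncard = (G.edgeCut S).ncard - 2 := by
    rw [Set.ncard_diff hpair (Set.toFinite _), Set.ncard_pair hne]
  have hge : 2 ≤ (G.edgeCut S).ncard := by
    have := Set.ncard_le_ncard hpair (Set.toFinite _)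
    rw [Set.ncard_pair hne] at this
    exact this
  omega

theorem liftcut_ge_notboth {S : Set V} (hs : s ∉ S)
    (h1 : G.IncVert s e₁) (h2 : G.IncVert s e₂)
    (hnb : ¬(G.other s e₁ ∈ S ∧ G.other s e₂ ∈ S)) :
    (G.edgeCut S).ncard ≤ ((G.lift s e₁ e₂).graph.edgeCut S).ncard := by
  classical
  rw [← Nat.card_coe_set_eq, ← Nat.card_coe_set_eq]
  by_cases hu : G.other s e₁ ∈ S
  · have hv : G.other s e₂ ∉ S := fun hv => hnb ⟨hu, hv⟩
    have huv : G.other s e₁ ≠ G.other s e₂ := fun h => hv (h ▸ hu)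
    have he₂ : e₂ ∉ G.edgeCut S := not_mem_cut_of_incident h2 hs hv
    have hinr : (Sum.inr ⟨PUnit.unit, huv⟩ : (G.lift s e₁ e₂).E)
        ∈ (G.lift s e₁ e₂).graph.edgeCut S := Or.inl ⟨hu, hv⟩
    let f : ↥(G.edgeCut S) → ↥((G.lift s e₁ e₂).graph.edgeCut S) := fun a =>
      if h : a.1 = e₁ then ⟨Sum.inr ⟨PUnit.unit, huv⟩, hinr⟩
      else ⟨Sum.inl ⟨a.1, ⟨h, fun hc => he₂ (hc ▸ a.2)⟩⟩, a.2⟩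
    have hinj : Function.Injective f := by
      intro a b hab
      simp only [f] at hab
      split_ifs at hab with ha hb hb
      · exact Subtype.ext (ha.trans hb.symm)
      · exact absurd (congrArg Subtype.val hab) (by simp)
      · exact absurd (congrArg Subtype.val hab) (by simp)
      · have h' := congrArg Subtype.val hab
        exact Subtype.ext
          (congrArg (fun z : {e : E // e ≠ e₁ ∧ e ≠ e₂} => z.1) (Sum.inl.inj h'))
    exact Nat.card_le_card_of_injective f hinj
  · by_cases hv : G.other s e₂ ∈ S
    · have huv : G.other s e₁ ≠ G.other s e₂ := fun h => hu (h ▸ hv)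
      have he₁ : e₁ ∉ G.edgeCut S := not_mem_cut_of_incident h1 hs hu
      have hinr : (Sum.inr ⟨PUnit.unit, huv⟩ : (G.lift s e₁ e₂).E)
          ∈ (G.lift s e₁ e₂).graph.edgeCut S := Or.inr ⟨hu, hv⟩
      let f : ↥(G.edgeCut S) → ↥((G.lift s e₁ e₂).graph.edgeCut S) := fun a =>
        if h : a.1 = e₂ then ⟨Sum.inr ⟨PUnit.unit, huv⟩, hinr⟩
        else ⟨Sum.inl ⟨a.1, ⟨fun hc => he₁ (hc ▸ a.2), h⟩⟩, a.2⟩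
      have hinj : Function.Injective f := by
        intro a b hab
        simp only [f] at hab
        split_ifs at hab with ha hb hb
        · exact Subtype.ext (ha.trans hb.symm)
        · exact absurd (congrArg Subtype.val hab) (by simp)
        · exact absurd (congrArg Subtype.val hab) (by simp)
        · have h' := congrArg Subtype.val hab
          exact Subtype.ext
            (congrArg (fun z : {e : E // e ≠ e₁ ∧ e ≠ e₂} => z.1) (Sum.inl.inj h'))
      exact Nat.card_le_card_of_injective f hinj
    · have he₁ : e₁ ∉ G.edgeCut S := not_mem_cut_of_incident h1 hs hu
      have he₂ : e₂ ∉ G.edgeCut S := not_mem_cut_of_incident h2 hs hv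
      let f : ↥(G.edgeCut S) → ↥((G.lift s e₁ e₂).graph.edgeCut S) := fun a =>
        ⟨Sum.inl ⟨a.1, ⟨fun hc => he₁ (hc ▸ a.2), fun hc => he₂ (hc ▸ a.2)⟩⟩, a.2⟩
      have hinj : Function.Injective f := by
        intro a b hab
        have h' := congrArg Subtype.val hab
        exact Subtype.ext
          (congrArg (fun z : {e : E // e ≠ e₁ ∧ e ≠ e₂} => z.1) (Sum.inl.inj h'))
      exact Nat.card_le_card_of_injective f hinj

end LiftCut2

end MGAux

namespace MGAux

open Multigraph

/-! ### Parity rounding -/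

/-- `k` rounded up to an even number. -/
def kk (k : ℕ) : ℕ := if Even k then k else k + 1

theorem even_kk (k : ℕ) : Even (kk k) := by
  unfold kk
  split_ifs with h
  · exact h
  · simpa [Nat.even_add_one] using h

theorem le_kk (k : ℕ) : k ≤ kk k := by
  unfold kk; split_ifs <;> omega

theorem kk_le (k : ℕ) : kk k ≤ k + 1 := by
  unfold kk; split_ifs <;> omega

theorem kk_le_of_even_le {k m : ℕ} (hm : Even m) (h : k ≤ m) : kk k ≤ m := by
  unfold kk
  split_ifs with he
  · exact h
  · rcases hm with ⟨r, hr⟩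
    rcases Nat.odd_iff.mp (Nat.not_even_iff_odd.mp he) with h'
    omega

theorem add_two_le_of_even_ne {k m : ℕ} (hm : Even m) (hge : kk k ≤ m) (hne : m ≠ kk k) :
    kk k + 2 ≤ m := by
  rcases hm with ⟨r, hr⟩
  rcases even_kk k with ⟨t, ht⟩
  omega

/-! ### Valid and tight vertex sets -/

variable {V E : Type}

/-- A set suitable for cut arguments around `s`: it avoids `s`, is nonempty,
and misses some vertex other than `s`. -/
def Valid (s : V) (S : Set V) : Prop :=
  s ∉ S ∧ S.Nonempty ∧ ∃ q, q ∉ S ∧ q ≠ s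

/-- A tight set: valid, with cut of the minimum possible (even) size. -/
def Tight (G : Multigraph V E) (s : V) (k : ℕ) (S : Set V) : Prop :=
  Valid s S ∧ (G.edgeCut S).ncard = kk k

section MainLemmas

variable [Finite V] [Finite E] (G : Multigraph V E) (s : V) (k : ℕ)

theorem valid_lb (hconn : G.SEdgeConnected s k) {S : Set V} (hS : Valid s S) :
    k ≤ (G.edgeCut S).ncard := by
  obtain ⟨hs, ⟨p, hp⟩, ⟨q, hq, hqs⟩⟩ := hS
  have hps : p ≠ s := fun h => hs (h ▸ hp)
  have hpq : p ≠ q := fun h => hq (h ▸ hp)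
  exact le_ncard_edgeCut_of_paths G (hconn p q hps hqs hpq) hp hq

theorem valid_lb' (hconn : G.SEdgeConnected s k) (heuler : ∀ v : V, Even (G.degree v))
    {S : Set V} (hS : Valid s S) : kk k ≤ (G.edgeCut S).ncard := by
  classical
  have : Fintype V := Fintype.ofFinite V
  have : Fintype E := Fintype.ofFinite E
  exact kk_le_of_even_le (even_ncard_edgeCut G heuler S) (valid_lb G s k hconn hS)

/-- **Liftability criterion**: if no tight set contains both non-`s` endpoints,
the pair is liftable. -/
theorem liftable_of_no_tight (hconn : G.SEdgeConnected s k)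
    (heuler : ∀ v : V, Even (G.degree v)) {e₁ e₂ : E} (hne : e₁ ≠ e₂)
    (h1 : G.IncVert s e₁) (h2 : G.IncVert s e₂)
    (hnt : ∀ S : Set V, Tight G s k S → ¬(G.other s e₁ ∈ S ∧ G.other s e₂ ∈ S)) :
    G.IsLiftable s k e₁ e₂ := by
  classical
  refine ⟨hne, h1, h2, ?_⟩
  intro x y hx hy hxy
  have core : ∀ S : Set V, s ∉ S → (∃ p, p ∈ S ∧ p ≠ s) → (∃ q, q ∉ S ∧ q ≠ s) →
      k ≤ ((G.lift s e₁ e₂).graph.edgeCut S).ncard := by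
    rintro S hs ⟨p, hp, hps⟩ hq3
    have hval : Valid s S := ⟨hs, ⟨p, hp⟩, hq3⟩
    by_cases hb : G.other s e₁ ∈ S ∧ G.other s e₂ ∈ S
    · have hneq : (G.edgeCut S).ncard ≠ kk k := fun h => hnt S ⟨hval, h⟩ hb
      have : Fintype V := Fintype.ofFinite V
      have : Fintype E := Fintype.ofFinite E
      have hge : kk k + 2 ≤ (G.edgeCut S).ncard :=
        add_two_le_of_even_ne (even_ncard_edgeCut G heuler S)
          (valid_lb' G s k hconn heuler hval) hneq
      have hsub := liftcut_ge_sub (G := G) (s := s) (e₁ := e₁) (e₂ := e₂) S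
      have hkk := le_kk k
      omega
    · have hge := liftcut_ge_notboth hs h1 h2 hb
      have hlb := valid_lb G s k hconn hval
      omega
  apply hardMenger _ hxy k
  intro S hxS hyS
  by_cases hsS : s ∈ S
  · rw [← edgeCut_compl]
    exact core Sᶜ (by simp [hsS]) ⟨y, hyS, hy⟩ ⟨x, by simp [hxS], hx⟩
  · exact core S hsS ⟨x, hxS, hx⟩ ⟨y, hyS, hy⟩

/-- A tight set containing both non-`s` endpoints kills liftability. -/
theorem not_liftable_of_tight (hk : 2 ≤ k) {S : Set V} (hT : Tight G s k S) {e₁ e₂ : E}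
    (h1 : G.IncVert s e₁) (h2 : G.IncVert s e₂)
    (hu : G.other s e₁ ∈ S) (hv : G.other s e₂ ∈ S) :
    ¬ G.IsLiftable s k e₁ e₂ := by
  rintro ⟨hne, _, _, hsec⟩
  obtain ⟨⟨hs, _, ⟨q, hq, hqs⟩⟩, hcard⟩ := hT
  have hu_s : G.other s e₁ ≠ s := other_ne G h1
  have huq : G.other s e₁ ≠ q := fun h => hq (h ▸ hu)
  have hpaths := hsec (G.other s e₁) q hu_s hqs huq
  have hcut := le_ncard_edgeCut_of_paths (G.lift s e₁ e₂).graph hpaths hu hq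
  have hle := liftcut_le_both hs hne h1 h2 hu hv
  have hkk := kk_le k
  omega

end MainLemmas

/-- Crossing lemma for simple graphs: a walk from inside `A` to outside `A`
contains a crossing edge. -/
theorem sg_crossing_aux {α : Type} (H : SimpleGraph α) {A : Set α} :
    ∀ {a b : α} (_w : H.Walk a b), a ∈ A → b ∉ A → ∃ p q, p ∈ A ∧ q ∉ A ∧ H.Adj p q := by
  intro a b w
  induction w with
  | nil => intro ha hb; exact absurd ha hb
  | @cons u v w' hadj p ih =>
    intro ha hb
    by_cases hc : v ∈ A
    · exact ih hc hb
    · exact ⟨u, v, ha, hc, hadj⟩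

end MGAux

namespace MGAux

open Multigraph

variable {V E : Type}

theorem other_eq_snd {G : Multigraph V E} {s : V} {e : E} (h : G.fst e = s) :
    G.other s e = G.snd e := by
  classical
  unfold Multigraph.other
  rw [if_pos h]

theorem other_eq_fst {G : Multigraph V E} {s : V} {e : E} (h : G.fst e ≠ s) :
    G.other s e = G.fst e := by
  classical
  unfold Multigraph.other
  rw [if_neg h]

end MGAux

open MGAux Multigraph in
theorem main_thm {V E : Type} [Finite V] [Finite E]
    (G : Multigraph V E) (s : V) (k : ℕ) (hk : 2 ≤ k)
    (heuler : ∀ v : V, Even (G.degree v)) (hconn : G.SEdgeConnected s k)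
    (hdeg : 2 ≤ G.degree s) :
    ¬ (G.liftingGraph s k)ᶜ.Connected := by
  classical
  intro hcon
  -- Two distinct edges at `s`.
  obtain ⟨a₀, b₀, ha₀, hb₀, hab₀⟩ :=
    (Set.one_lt_ncard_iff (Set.toFinite _)).mp (lt_of_lt_of_le one_lt_two hdeg)
  -- It suffices to produce a liftable-cross partition.
  suffices hsuff : ∃ A' : Set {e : E // G.IncVert s e},
      (∃ a, a ∈ A') ∧ (∃ b, b ∉ A') ∧
        ∀ p q : {e : E // G.IncVert s e}, p ∈ A' → q ∉ A' →
          G.IsLiftable s k p.1 q.1 by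
    obtain ⟨A', ⟨a, ha⟩, ⟨b, hb⟩, hcross⟩ := hsuff
    obtain ⟨w⟩ := hcon.preconnected a b
    obtain ⟨p, q, hp, hq, hadj⟩ := sg_crossing_aux _ w ha hb
    rw [SimpleGraph.compl_adj] at hadj
    apply hadj.2
    have hlift := hcross p q hp hq
    show (SimpleGraph.fromRel fun e f => G.IsLiftable s k e.1 f.1).Adj p q
    rw [SimpleGraph.fromRel_adj]
    exact ⟨hadj.1, Or.inl hlift⟩
  by_cases hF : ∃ X : Set V, Tight G s k X ∧ ∃ e, G.IncVert s e ∧ G.other s e ∈ X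
  · -- A maximal tight set meeting the neighbourhood of `s`.
    obtain ⟨X, hXmem, hXmax⟩ := Set.Finite.exists_maximalFor id
      {X : Set V | Tight G s k X ∧ ∃ e, G.IncVert s e ∧ G.other s e ∈ X}
      (Set.toFinite _) hF
    obtain ⟨hXT, e₀, he₀i, he₀X⟩ := hXmem
    have hsX : s ∉ X := hXT.1.1
    refine ⟨{z | G.other s z.1 ∈ X}, ⟨⟨e₀, he₀i⟩, he₀X⟩, ?_, ?_⟩
    · -- some edge at `s` has its other endpoint outside `X`
      by_contra hall'
      push_neg at hall'
      have hall : ∀ e, G.IncVert s e → G.other s e ∈ X := by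
        intro e he
        simpa using hall' ⟨e, he⟩
      obtain ⟨_, ⟨x₀, hx₀⟩, ⟨q₀, hq₀, hq₀s⟩⟩ := hXT.1
      set Y : Set V := {t | t ∉ X ∧ t ≠ s} with hY
      have hYvalid : Valid s Y := by
        refine ⟨fun h => h.2 rfl, ⟨q₀, hq₀, hq₀s⟩, ⟨x₀, ?_, fun h => hsX (h ▸ hx₀)⟩⟩
        intro h
        exact h.1 hx₀
      have hYk : k ≤ (G.edgeCut Y).ncard := valid_lb G s k hconn hYvalid
      have hδ : {e | G.IncVert s e} ⊆ G.edgeCut X :=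
        fun e he => mem_cut_of_incident he hsX (hall e he)
      have hYX : G.edgeCut Y ⊆ G.edgeCut X := by
        rintro e (⟨hfY, hsnY⟩ | ⟨hfnY, hsY⟩)
        · -- fst ∈ Y, snd ∉ Y
          have hfX : G.fst e ∉ X := hfY.1
          have hfs : G.fst e ≠ s := hfY.2
          have hsnd : G.snd e ∈ X := by
            by_contra hc
            have hss : G.snd e = s := by
              by_contra hc2
              exact hsnY ⟨hc, hc2⟩
            have := hall e (Or.inr hss)
            rw [other_eq_fst hfs] at this
            exact hfX this
          exact Or.inr ⟨hfX, hsnd⟩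
        · -- snd ∈ Y, fst ∉ Y
          have hsX' : G.snd e ∉ X := hsY.1
          have hfst : G.fst e ∈ X := by
            by_contra hc
            have hss : G.fst e = s := by
              by_contra hc2
              exact hfnY ⟨hc, hc2⟩
            have := hall e (Or.inl hss)
            rw [other_eq_snd hss] at this
            exact hsY.1 this
          exact Or.inl ⟨hfst, hsX'⟩
      have hdisj : Disjoint (G.edgeCut Y) {e | G.IncVert s e} := by
        rw [Set.disjoint_left]
        intro e heY hei
        have hoX : G.other s e ∈ X := hall e hei
        rcases inc_other G hei with ⟨u1, u2⟩ | ⟨u1, u2⟩ <;>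
          rcases heY with ⟨w1, w2⟩ | ⟨w1, w2⟩
        · exact w1.2 u1
        · exact (u2 ▸ w2 : G.other s e ∈ Y).1 hoX
        · exact (u1 ▸ w1 : G.other s e ∈ Y).1 hoX
        · exact w2.2 u2
      have hunion : (G.edgeCut Y).ncard + {e | G.IncVert s e}.ncard ≤ (G.edgeCut X).ncard := by
        rw [← Set.ncard_union_eq hdisj (Set.toFinite _) (Set.toFinite _)]
        exact Set.ncard_le_ncard (Set.union_subset hYX hδ) (Set.toFinite _)
      have hXcard := hXT.2
      have hkk := kk_le k
      have hdeg' : 2 ≤ {e | G.IncVert s e}.ncard := hdeg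
      omega
    · -- every cross pair is liftable
      intro p q hp hq
      simp only [Set.mem_setOf_eq] at hp hq
      have hpq : p.1 ≠ q.1 := by
        intro h
        rw [h] at hp
        exact hq hp
      apply liftable_of_no_tight G s k hconn heuler hpq p.2 q.2
      rintro Z hZT ⟨hu, hw⟩
      have hsZ : s ∉ Z := hZT.1.1
      by_cases hcov : ∀ t, t ∈ X ∪ Z ∪ {s}
      · -- posimodular case
        have hXZ : (X \ Z).Nonempty := by
          rw [Set.nonempty_iff_ne_empty]
          intro hempty
          have hXsub : X ⊆ Z := by
            intro t ht
            by_contra hc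
            exact absurd hempty (Set.nonempty_iff_ne_empty.mp ⟨t, ht, hc⟩)
          obtain ⟨_, _, ⟨q', hq', hq's⟩⟩ := hZT.1
          rcases hcov q' with (hq'' | hq'') | hq''
          · exact hq' (hXsub hq'')
          · exact hq' hq''
          · exact hq's hq''
        have hval1 : Valid s (X \ Z) :=
          ⟨fun h => hsX h.1, hXZ, ⟨G.other s q.1, fun h => hq h.1, other_ne G q.2⟩⟩
        have hval2 : Valid s (Z \ X) :=
          ⟨fun h => hsZ h.1, ⟨G.other s q.1, hw, hq⟩, ⟨G.other s p.1, fun h => h.2 hp,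
            other_ne G p.2⟩⟩
        have : Fintype V := Fintype.ofFinite V
        have : Fintype E := Fintype.ofFinite E
        have hpos := posimod G X Z
        have hb1 := valid_lb' G s k hconn heuler hval1
        have hb2 := valid_lb' G s k hconn heuler hval2
        have hcc : 1 ≤ ({e : E | (G.fst e ∈ X ∩ Z ∧ G.snd e ∉ X ∪ Z) ∨
            (G.snd e ∈ X ∩ Z ∧ G.fst e ∉ X ∪ Z)}).ncard := by
          have hsnot : s ∉ X ∪ Z := by
            rintro (h | h)
            · exact hsX h
            · exact hsZ h
          have hmem : p.1 ∈ {e : E | (G.fst e ∈ X ∩ Z ∧ G.snd e ∉ X ∪ Z) ∨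
              (G.snd e ∈ X ∩ Z ∧ G.fst e ∉ X ∪ Z)} := by
            rcases inc_other G p.2 with ⟨u1, u2⟩ | ⟨u1, u2⟩
            · refine Or.inr ⟨?_, ?_⟩
              · rw [u2]; exact ⟨hp, hu⟩
              · rw [u1]; exact hsnot
            · refine Or.inl ⟨?_, ?_⟩
              · rw [u1]; exact ⟨hp, hu⟩
              · rw [u2]; exact hsnot
          exact (Set.ncard_pos (Set.toFinite _)).mpr ⟨p.1, hmem⟩
        have hXcard := hXT.2
        have hZcard := hZT.2
        omega
      · -- union case: contradicts maximality
        push_neg at hcov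
        obtain ⟨t, ht⟩ := hcov
        have htX : t ∉ X := fun h => ht (Or.inl (Or.inl h))
        have htZ : t ∉ Z := fun h => ht (Or.inl (Or.inr h))
        have hts : t ≠ s := fun h => ht (Or.inr h)
        have hvalU : Valid s (X ∪ Z) := by
          refine ⟨?_, ⟨G.other s p.1, Or.inl hp⟩, ⟨t, ?_, hts⟩⟩
          · rintro (h | h)
            · exact hsX h
            · exact hsZ h
          · rintro (h | h)
            · exact htX h
            · exact htZ h
        have hvalI : Valid s (X ∩ Z) :=
          ⟨fun h => hsX h.1, ⟨G.other s p.1, hp, hu⟩, ⟨t, fun h => htX h.1, hts⟩⟩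
        have : Fintype V := Fintype.ofFinite V
        have : Fintype E := Fintype.ofFinite E
        have hsub := submod_union_inter G X Z
        have hbU := valid_lb' G s k hconn heuler hvalU
        have hbI := valid_lb' G s k hconn heuler hvalI
        have hXcard := hXT.2
        have hZcard := hZT.2
        have hUcard : (G.edgeCut (X ∪ Z)).ncard = kk k := by omega
        have hUmem : X ∪ Z ∈ {X : Set V | Tight G s k X ∧
            ∃ e, G.IncVert s e ∧ G.other s e ∈ X} :=
          ⟨⟨hvalU, hUcard⟩, p.1, p.2, Or.inl hp⟩
        have heq := Set.Subset.antisymm Set.subset_union_left (hXmax hUmem Set.subset_union_left)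
        have : G.other s q.1 ∈ X := by
          rw [show X = X ∪ Z from heq]
          exact Or.inr hw
        exact hq this
  · -- no tight set meets the neighbourhood: every pair of edges at `s` is liftable
    push_neg at hF
    refine ⟨{⟨a₀, ha₀⟩}, ⟨⟨a₀, ha₀⟩, rfl⟩, ⟨⟨b₀, hb₀⟩, ?_⟩, ?_⟩
    · intro h
      rw [Set.mem_singleton_iff] at h
      exact hab₀ (congrArg Subtype.val h).symm
    · intro p q hp hq
      have hpq : p.1 ≠ q.1 := by
        intro h
        apply hq
        rw [Set.mem_singleton_iff] at hp
        subst hp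
        exact Set.mem_singleton_iff.mpr (Subtype.ext h.symm)
      apply liftable_of_no_tight G s k hconn heuler hpq p.2 q.2
      rintro Z hZT ⟨hu, _⟩
      exact (hF Z hZT p.1 p.2) hu

/-- Thomassen. Let `k ≥ 2` and let `G` be a finite Eulerian
`(s,k)`-edge-connected graph with `deg(s) ≥ 2`. Then the complement of the lifting graph
`L(G, s, k)` is disconnected. -/
theorem liftingGraph_compl_disconnected_of_eulerian {V E : Type} [Finite V] [Finite E]
    (G : Multigraph V E) (s : V) (k : ℕ) (hk : 2 ≤ k)
    (heuler : ∀ v : V, Even (G.degree v)) (hconn : G.SEdgeConnected s k)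
    (hdeg : 2 ≤ G.degree s) :
    ¬ (G.liftingGraph s k)ᶜ.Connected := by
  exact main_thm G s k hk heuler hconn hdeg
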